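/- Let s be Sylvester's sequence and P the simplex in ℝ^n with vertices u_0, …, u_n where u_i (for i < n) has s_i - 1 in coordinate i and -1 elsewhere, and u_n = (-1, …, -1). Then P is cut out by the inequalities x_i ≥ -1 for 0 ≤ i ≤ n-1 together with ∑_{i=0}^{n-1} ((s_n - 1)/s_i)·x_i ≤ 1. (This says the simplex P_2 is isomorphic to its polar dual.) -/

import Mathlib

lemma syl_two (s : ℕ → ℕ) (h0 : s 0 = 2)
    (hrec : ∀ k, s (k + 1) = s k ^ 2 - s k + 1) : ∀ k, 2 ≤ s k := by
  intro k
  induction k with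
  | zero => omega
  | succ k ih =>
    have h := hrec k
    have h2 : 2 * s k ≤ s k * s k := Nat.mul_le_mul_right _ ih
    have : s k ^ 2 = s k * s k := sq (s k)
    omega

lemma syl_sum (s : ℕ → ℕ) (h0 : s 0 = 2)
    (hrec : ∀ k, s (k + 1) = s k ^ 2 - s k + 1) :
    ∀ n, ∑ i ∈ Finset.range n, (1 / (s i : ℝ)) = 1 - 1 / ((s n : ℝ) - 1) := by
  intro n
  induction n with
  | zero => simp [h0]; norm_num
  | succ n ih =>
    have h2 : (2:ℝ) ≤ s n := by exact_mod_cast syl_two s h0 hrec n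
    have hR : (s (n+1) : ℝ) = (s n : ℝ)^2 - s n + 1 := by
      have hle : s n ≤ s n ^ 2 := Nat.le_self_pow (by norm_num) _
      rw [hrec n]
      push_cast [hle]
      ring
    rw [Finset.sum_range_succ, ih, hR]
    have h1 : (s n : ℝ) - 1 ≠ 0 := by nlinarith
    have h0' : (s n : ℝ) ≠ 0 := by nlinarith
    rw [show (s n:ℝ)^2 - (s n:ℝ) + 1 - 1 = (s n:ℝ) * ((s n:ℝ) - 1) by ring]
    field_simp
    ring

theorem P2_dual_description (s : ℕ → ℕ) (h0 : s 0 = 2)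
    (hrec : ∀ k, s (k + 1) = s k ^ 2 - s k + 1) (n : ℕ) :
    convexHull ℝ (Set.range (fun k : Fin (n + 1) => fun j : Fin n =>
        if (k : ℕ) < n then (if (j : ℕ) = (k : ℕ) then (s (k : ℕ) : ℝ) - 1 else -1)
        else -1)) =
    {x : Fin n → ℝ | (∀ i, -1 ≤ x i) ∧
      ∑ i : Fin n, (((s n : ℝ) - 1) / (s (i : ℕ) : ℝ)) * x i ≤ 1} := by
  set u : Fin (n+1) → Fin n → ℝ := fun k : Fin (n + 1) => fun j : Fin n =>
        if (k : ℕ) < n then (if (j : ℕ) = (k : ℕ) then (s (k : ℕ) : ℝ) - 1 else -1)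
        else -1 with hu
  set c : Fin n → ℝ := fun i => ((s n : ℝ) - 1) / (s (i : ℕ) : ℝ) with hc
  have hs2 : ∀ k, 2 ≤ (s k : ℝ) := fun k => by exact_mod_cast syl_two s h0 hrec k
  have hspos : ∀ k, (0:ℝ) < s k := fun k => by linarith [hs2 k]
  have hsne : ∀ k, (s k : ℝ) ≠ 0 := fun k => ne_of_gt (hspos k)
  have hD : (0:ℝ) < (s n : ℝ) - 1 := by linarith [hs2 n]
  -- sum of c
  have hCsum : ∑ j : Fin n, c j = (s n : ℝ) - 2 := by
    have := syl_sum s h0 hrec n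
    calc ∑ j : Fin n, c j = ((s n : ℝ) - 1) * ∑ j : Fin n, (1 / (s (j:ℕ) : ℝ)) := by
          rw [Finset.mul_sum]; exact Finset.sum_congr rfl fun j _ => by rw [hc]; ring
      _ = ((s n : ℝ) - 1) * (1 - 1/((s n : ℝ) - 1)) := by
          rw [← this, Fin.sum_univ_eq_sum_range (fun i => 1 / (s i : ℝ))]
      _ = (s n : ℝ) - 2 := by field_simp; ring
  apply Set.Subset.antisymm
  · -- convex hull ⊆ halfspace description
    apply convexHull_min
    · rintro _ ⟨k, rfl⟩
      by_cases hk : (k : ℕ) < n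
      · constructor
        · intro j
          simp only [hu, hk, if_true]
          split
          · linarith [hs2 (k:ℕ)]
          · exact le_rfl
        · have key : ∀ j : Fin n, c j * u k j =
              (if j = (⟨(k:ℕ), hk⟩ : Fin n) then c j * (s (k:ℕ) : ℝ) else 0) - c j := by
            intro j
            by_cases hj : j = (⟨(k:ℕ), hk⟩ : Fin n)
            · simp only [hu, hk, if_true, hj, if_pos rfl]
              ring
            · have hj' : ¬ ((j:ℕ) = (k:ℕ)) := by
                intro h; exact hj (Fin.ext h)
              simp only [hu, hk, if_true, hj', if_false, if_neg hj]
              ring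
          calc ∑ j : Fin n, c j * u k j
              = (∑ j : Fin n, if j = (⟨(k:ℕ), hk⟩ : Fin n) then c j * (s (k:ℕ) : ℝ) else 0)
                - ∑ j : Fin n, c j := by
                rw [← Finset.sum_sub_distrib]
                exact Finset.sum_congr rfl fun j _ => key j
            _ = c ⟨(k:ℕ), hk⟩ * (s (k:ℕ) : ℝ) - ((s n : ℝ) - 2) := by
                rw [Finset.sum_ite_eq', hCsum]; simp
            _ = 1 := by
                rw [hc]
                simp only []
                rw [div_mul_cancel₀ _ (hsne (k:ℕ))]
                ring
            _ ≤ 1 := le_rfl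
      · constructor
        · intro j; simp [hu, hk]
        · have : ∀ j : Fin n, c j * u k j = -c j := by
            intro j; simp only [hu, hk, if_false]; ring
          rw [Finset.sum_congr rfl fun j _ => this j, Finset.sum_neg_distrib, hCsum]
          linarith [hs2 n]
    · -- convexity
      rintro x ⟨hx1, hx2⟩ y ⟨hy1, hy2⟩ a b ha hb hab
      constructor
      · intro i
        simp only [Pi.add_apply, Pi.smul_apply, smul_eq_mul]
        nlinarith [hx1 i, hy1 i]
      · have : ∑ i : Fin n, c i * (a * x i + b * y i)
            = a * ∑ i : Fin n, c i * x i + b * ∑ i : Fin n, c i * y i := by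
          rw [Finset.mul_sum, Finset.mul_sum, ← Finset.sum_add_distrib]
          exact Finset.sum_congr rfl fun i _ => by ring
        simp only [Pi.add_apply, Pi.smul_apply, smul_eq_mul]
        rw [this]
        nlinarith
  · -- halfspaces ⊆ convex hull
    rintro x ⟨hx1, hx2⟩
    set w : Fin (n+1) → ℝ := fun k =>
      if h : (k:ℕ) < n then (x ⟨(k:ℕ), h⟩ + 1) / (s (k:ℕ) : ℝ)
      else 1 - ∑ j : Fin n, (x j + 1) / (s (j:ℕ) : ℝ) with hw
    have hwcs : ∀ i : Fin n, w i.castSucc = (x i + 1) / (s (i:ℕ) : ℝ) := by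
      intro i
      simp only [hw, Fin.coe_castSucc, i.isLt, dif_pos]
    have hwlast : w (Fin.last n) = 1 - ∑ j : Fin n, (x j + 1) / (s (j:ℕ) : ℝ) := by
      simp [hw]
    have hwsum : ∑ k : Fin (n+1), w k = 1 := by
      rw [Fin.sum_univ_castSucc, hwlast]
      rw [Finset.sum_congr rfl fun i _ => hwcs i]
      ring
    have hTsum : ∑ j : Fin n, (x j + 1) / (s (j:ℕ) : ℝ) ≤ 1 := by
      set T := ∑ j : Fin n, x j / (s (j:ℕ) : ℝ) with hT
      have hx2' : ((s n : ℝ) - 1) * T ≤ 1 := by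
        rw [hT, Finset.mul_sum]
        calc ∑ i : Fin n, ((s n : ℝ) - 1) * (x i / (s (i:ℕ) : ℝ))
            = ∑ i : Fin n, c i * x i := Finset.sum_congr rfl fun i _ => by rw [hc]; ring
          _ ≤ 1 := hx2
      have hsplit : ∑ j : Fin n, (x j + 1) / (s (j:ℕ) : ℝ)
          = T + (1 - 1/((s n : ℝ) - 1)) := by
        have h1 : ∑ j : Fin n, (1:ℝ)/(s (j:ℕ) : ℝ) = 1 - 1/((s n:ℝ)-1) := by
          rw [Fin.sum_univ_eq_sum_range (fun i => 1/(s i:ℝ))]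
          exact syl_sum s h0 hrec n
        rw [hT, ← h1, ← Finset.sum_add_distrib]
        exact Finset.sum_congr rfl fun j _ => by rw [add_div]
      rw [hsplit]
      have hTle : T ≤ 1 / ((s n : ℝ) - 1) := by
        rw [le_div_iff₀ hD]; linarith [mul_comm T ((s n : ℝ) - 1)]
      linarith
    have hwnn : ∀ k, 0 ≤ w k := by
      intro k
      by_cases h : (k:ℕ) < n
      · rw [hw]; simp only [dif_pos h]
        apply div_nonneg _ (le_of_lt (hspos _))
        linarith [hx1 ⟨(k:ℕ), h⟩]
      · rw [hw]; simp only [dif_neg h]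
        linarith [hTsum]
    have hx_eq : x = ∑ k : Fin (n+1), w k • u k := by
      funext j
      rw [Finset.sum_apply]
      simp only [Pi.smul_apply, smul_eq_mul]
      rw [Fin.sum_univ_castSucc]
      have hlast : u (Fin.last n) j = -1 := by simp [hu]
      have hterm : ∀ i : Fin n, w i.castSucc * u i.castSucc j
          = (if j = i then w i.castSucc * (s (i:ℕ) : ℝ) else 0) - w i.castSucc := by
        intro i
        by_cases hj : j = i
        · have : ((j:ℕ) = ((i.castSucc):ℕ)) := by rw [hj]; rfl
          simp only [hu, Fin.coe_castSucc, i.isLt, if_true, this, if_pos rfl, if_pos hj]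
          ring
        · have hj' : ¬ ((j:ℕ) = (i:ℕ)) := fun h => hj (Fin.ext h)
          simp only [hu, Fin.coe_castSucc, i.isLt, if_true, hj', if_false, if_neg hj]
          ring
      rw [hlast, Finset.sum_congr rfl fun i _ => hterm i, Finset.sum_sub_distrib,
        Finset.sum_ite_eq]
      simp only [Finset.mem_univ, if_true, hwcs]
      have : (x j + 1) / (s (j:ℕ) : ℝ) * (s (j:ℕ) : ℝ) = x j + 1 :=
        div_mul_cancel₀ _ (hsne (j:ℕ))
      rw [this]
      rw [hwlast]
      ring
    rw [hx_eq, ← Finset.centerMass_eq_of_sum_1 Finset.univ u hwsum]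
    exact Finset.centerMass_mem_convexHull Finset.univ (fun k _ => hwnn k)
      (by rw [hwsum]; norm_num) (fun k _ => Set.mem_range_self k)
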